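/- arXiv:1310.2118 — 2 statements merged into one kernel-verified Lean document; each statement's English description precedes it below -/
import Mathlib

section
/- Let G be a flow graph with spanning tree T. For any two vertices u and v, the sets loop(u) and loop(v) are either disjoint or nested (one contains the other). -/
universe u

variable {V : Type u}

attribute [local instance] Classical.propDecidable

/-- A flow graph: a directed graph with arc relation `A` and start vertex `s`. -/
structure FlowGraph (V : Type u) where
  A : V → V → Prop
  s : V

namespace FlowGraph

/-- `p` is a (directed) path from `a` to `b`: a nonempty list of vertices starting at `a`,
ending at `b`, with consecutive vertices joined by arcs. -/
def IsPath (G : FlowGraph V) (p : List V) (a b : V) : Prop :=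
  p ≠ [] ∧ p.head? = some a ∧ p.getLast? = some b ∧ p.Chain' G.A

def Reach (G : FlowGraph V) (a b : V) : Prop := ∃ p, G.IsPath p a b

/-- `u` dominates `v`: every path from the start vertex `s` to `v` contains `u`. -/
def Dom (G : FlowGraph V) (u v : V) : Prop :=
  ∀ p, G.IsPath p G.s v → u ∈ p

/-- Acyclic: no cycle of more than one vertex, i.e. no two distinct mutually reachable
vertices. -/
def Acyclic (G : FlowGraph V) : Prop :=
  ∀ a b, a ≠ b → ¬ (G.Reach a b ∧ G.Reach b a)

/-- A spanning tree of `G` rooted at `s`, given by a parent function: every non-root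
vertex has a tree arc from its parent, and the parent chain of every vertex reaches `s`. -/
structure SpanningTree (G : FlowGraph V) where
  parent : V → V
  parent_arc : ∀ v, v ≠ G.s → G.A (parent v) v
  parent_root : parent G.s = G.s
  root_reach : ∀ v, Relation.ReflTransGen (fun a b => parent a = b) v G.s

/-- `u` is an ancestor of `v` in the tree `T` (reflexively). -/
def Anc {G : FlowGraph V} (T : SpanningTree G) (u v : V) : Prop :=
  Relation.ReflTransGen (fun a b => T.parent a = b) v u

/-- Replace occurrences of `v` by `x`. -/
noncomputable def repl (v x a : V) : V := if a = v then x else a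

/-- Contraction of vertex `v` into vertex `x`: every arc end equal to `v` is replaced by `x`. -/
noncomputable def contract (G : FlowGraph V) (v x : V) : FlowGraph V where
  A a b := ∃ a' b', G.A a' b' ∧ a = repl v x a' ∧ b = repl v x b'
  s := G.s

/-- `x ∈ loop(u)`: `x` is a descendant of `u` in `T` with a path from `x` to `u` in `G`
containing only descendants of `u` in `T`. -/
def InLoop (G : FlowGraph V) (T : SpanningTree G) (u x : V) : Prop :=
  Anc T u x ∧ ∃ p, G.IsPath p x u ∧ ∀ y ∈ p, Anc T u y

/-- `d` is an immediate-dominator function for `G`: for each `v ≠ s`, `d v ≠ v` is a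
dominator of `v` and every dominator of `v` other than `v` itself dominates `d v`. -/
def IsIdom (G : FlowGraph V) (d : V → V) : Prop :=
  ∀ v, v ≠ G.s → d v ≠ v ∧ G.Dom (d v) v ∧
    ∀ u, G.Dom u v → u ≠ v → G.Dom u (d v)

end FlowGraph

open FlowGraph

lemma anc_trans {G : FlowGraph V} {T : SpanningTree G} {v u z : V}
    (h1 : Anc T v u) (h2 : Anc T u z) : Anc T v z :=
  h2.trans h1

lemma anc_s {G : FlowGraph V} {T : SpanningTree G} {u : V}
    (h : Anc T u G.s) : u = G.s := by
  unfold Anc at h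
  induction h with
  | refl => rfl
  | tail _ hbc ih => subst ih; rw [T.parent_root] at hbc; exact hbc.symm

lemma anc_total {G : FlowGraph V} {T : SpanningTree G} {x u v : V}
    (hu : Anc T u x) (hv : Anc T v x) : Anc T u v ∨ Anc T v u := by
  unfold Anc at *
  induction hu using Relation.ReflTransGen.head_induction_on with
  | refl => exact Or.inr hv
  | head hab _ ih =>
    rcases Relation.ReflTransGen.cases_head hv with h | ⟨c, hc, hcv⟩
    · subst h; exact Or.inl (Relation.ReflTransGen.head hab (by assumption))
    · rw [hab] at hc; subst hc; exact ih hcv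

/-- Along the tree, there is a graph path from an ancestor down to a descendant,
all of whose vertices are descendants of the ancestor. -/
lemma tree_path {G : FlowGraph V} {T : SpanningTree G} {u x : V}
    (h : Anc T u x) : ∃ p, G.IsPath p u x ∧ ∀ y ∈ p, Anc T u y := by
  unfold Anc at h
  induction h using Relation.ReflTransGen.head_induction_on with
  | refl =>
    refine ⟨[u], ⟨by simp, by simp, by simp, by exact List.IsChain.singleton u⟩, ?_⟩
    intro y hy
    simp at hy
    subst hy
    exact Relation.ReflTransGen.refl
  | @head a b hab hbu ih =>
    obtain ⟨p, ⟨hne, hhd, hlast, hch⟩, hmem⟩ := ih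
    by_cases ha : a = G.s
    · -- then b = parent a = s, and p is a path from u to s; since s ∈ p, u = s, so a = u
      subst ha
      rw [T.parent_root] at hab
      subst hab
      have hs : G.s ∈ p := by
        obtain ⟨h, heq⟩ := List.mem_getLast?_eq_getLast (l := p) (x := G.s)
          (by simp [hlast, Option.mem_def])
        rw [heq]
        exact List.getLast_mem h
      have hus : u = G.s := anc_s (hmem _ hs)
      exact ⟨p, ⟨hne, hhd, hlast, hch⟩, hmem⟩
    · refine ⟨p ++ [a], ⟨by simp [hne], ?_, ?_, ?_⟩, ?_⟩
      · cases p with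
        | nil => exact absurd rfl hne
        | cons hd tl => simpa using hhd
      · simp
      · rw [List.Chain', List.isChain_append]
        refine ⟨hch, by simp, ?_⟩
        intro z hz w hw
        simp at hw
        rw [hlast] at hz
        simp at hz
        subst hz; subst hw
        rw [← hab]
        exact T.parent_arc a ha
      · intro y hy
        rcases List.mem_append.mp hy with h1 | h1
        · exact hmem y h1
        · simp at h1
          subst h1
          exact Relation.ReflTransGen.head hab hbu

lemma path_append {G : FlowGraph V} {p q : List V} {a b c : V}
    (hp : G.IsPath p a b) (hq : G.IsPath q b c) :
    ∃ r, G.IsPath r a c ∧ ∀ y ∈ r, y ∈ p ∨ y ∈ q := by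
  obtain ⟨hpne, hphd, hplast, hpch⟩ := hp
  obtain ⟨hqne, hqhd, hqlast, hqch⟩ := hq
  cases q with
  | nil => exact absurd rfl hqne
  | cons b' t =>
    simp at hqhd
    subst hqhd
    cases t with
    | nil =>
      simp at hqlast
      subst hqlast
      exact ⟨p, ⟨hpne, hphd, hplast, hpch⟩, fun y hy => Or.inl hy⟩
    | cons w t' =>
      refine ⟨p ++ (w :: t'), ⟨by simp [hpne], ?_, ?_, ?_⟩, ?_⟩
      · cases p with
        | nil => exact absurd rfl hpne
        | cons hd tl => simpa using hphd
      · rw [List.getLast?_append_of_ne_nil p (by simp)]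
        rw [List.getLast?_cons_cons] at hqlast
        exact hqlast
      · rw [List.Chain', List.isChain_append]
        refine ⟨hpch, (List.isChain_cons.mp hqch).2, ?_⟩
        intro z hz y hy
        rw [hplast] at hz
        simp at hz hy
        subst hz; subst hy
        exact (List.isChain_cons.mp hqch).1 w rfl
      · intro y hy
        rcases List.mem_append.mp hy with h1 | h1
        · exact Or.inl h1
        · exact Or.inr (List.mem_cons_of_mem _ h1)

/-- If `v` is an ancestor of `u` and the loops of `u` and `v` intersect, then
`loop(u) ⊆ loop(v)`. -/
lemma loop_subset {G : FlowGraph V} {T : SpanningTree G} {u v x : V}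
    (hvu : Anc T v u) (hxu : InLoop G T u x) (hxv : InLoop G T v x) :
    ∀ y, InLoop G T u y → InLoop G T v y := by
  intro y ⟨huy, p, hp, hpmem⟩
  obtain ⟨hux, _⟩ := hxu
  obtain ⟨_, q, hq, hqmem⟩ := hxv
  refine ⟨anc_trans hvu huy, ?_⟩
  obtain ⟨r, hr, hrmem⟩ := tree_path hux
  obtain ⟨pr, hpr, hprmem⟩ := path_append hp hr
  obtain ⟨prq, hprq, hprqmem⟩ := path_append hpr hq
  refine ⟨prq, hprq, ?_⟩
  intro z hz
  rcases hprqmem z hz with h1 | h1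
  · rcases hprmem z h1 with h2 | h2
    · exact anc_trans hvu (hpmem z h2)
    · exact anc_trans hvu (hrmem z h2)
  · exact hqmem z h1

/-- For any two vertices `u`, `v`, the sets `loop(u)` and `loop(v)` are either disjoint
or nested. -/
theorem stmt7 (G : FlowGraph V) (T : SpanningTree G)
    (hreach : ∀ v, G.Reach G.s v) (u v : V) :
    (∀ x, InLoop G T u x → ¬ InLoop G T v x) ∨
    (∀ x, InLoop G T u x → InLoop G T v x) ∨
    (∀ x, InLoop G T v x → InLoop G T u x) := by
  by_cases h : ∃ x, InLoop G T u x ∧ InLoop G T v x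
  · obtain ⟨x, hxu, hxv⟩ := h
    rcases anc_total hxu.1 hxv.1 with huv | hvu
    · exact Or.inr (Or.inr (loop_subset huv hxv hxu))
    · exact Or.inr (Or.inl (loop_subset hvu hxu hxv))
  · left
    intro x hx hx'
    exact h ⟨x, hx, hx'⟩
end

section
/- Let u, v be distinct vertices with v ∈ loop(u) and d(x) > u for all descendants x of u in T. Let G' be formed from G by the operation transform(u, v): first, for each arc from v to a proper descendant w ∉ {v, p(v)} of u in T, add an arc (p(u), w); then contract v into p(v). Then for all vertices x, w ≠ v, x dominates w in G' if and only if x dominates w in G. -/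
universe u

variable {V : Type u}

attribute [local instance] Classical.propDecidable

open FlowGraph

/-- `transform(u, v)`: first, for each arc from `v` to a proper descendant
`w ∉ {v, p v}` of `u` in `T`, add an arc `(p u, w)`; then contract `v` into `p v`. -/
noncomputable def transform (G : FlowGraph V) (T : SpanningTree G) (u v : V) : FlowGraph V :=
  FlowGraph.contract
    ⟨fun a b => G.A a b ∨
      (a = T.parent u ∧ G.A v b ∧ Anc T u b ∧ b ≠ u ∧ b ≠ v ∧ b ≠ T.parent v), G.s⟩
    v (T.parent v)

-- AUX SECTION (to be appended before theorem)
section Infra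
variable {G : FlowGraph V}

lemma isPath_single (a : V) : G.IsPath [a] a a :=
  ⟨by simp, rfl, rfl, List.isChain_singleton a⟩

lemma isPath_pair {a b : V} (h : G.A a b) : G.IsPath [a, b] a b :=
  ⟨by simp, rfl, rfl, List.isChain_pair.2 h⟩

lemma isPath_cons {p : List V} {a b c : V} (h : G.IsPath p b c) (ha : G.A a b) :
    G.IsPath (a :: p) a c := by
  obtain ⟨hne, hh, hl, hc⟩ := h
  refine ⟨by simp, rfl, ?_, ?_⟩
  · obtain ⟨y, t, rfl⟩ := List.exists_cons_of_ne_nil hne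
    rw [List.getLast?_cons_cons]; exact hl
  · unfold List.Chain'; rw [List.isChain_cons]
    exact ⟨fun y hy => by rw [hh] at hy; cases hy; exact ha, hc⟩

lemma isPath_comp {p q : List V} {a b c : V} (hp : G.IsPath p a b) (hq : G.IsPath q b c) :
    G.IsPath (p ++ q.tail) a c ∧ ∀ z ∈ p ++ q.tail, z ∈ p ∨ z ∈ q := by
  obtain ⟨hpne, hph, hpl, hpc⟩ := hp
  obtain ⟨hqne, hqh, hql, hqc⟩ := hq
  obtain ⟨y, t, rfl⟩ := List.exists_cons_of_ne_nil hqne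
  have hyb : y = b := by simpa using hqh
  subst hyb
  constructor
  · refine ⟨by simp [hpne], ?_, ?_, ?_⟩
    · cases p with | nil => exact absurd rfl hpne | cons a' t' => simpa using hph
    · rcases t with _ | ⟨z, t'⟩
      · simp only [List.tail_cons, List.append_nil]
        rw [hpl]; simpa using hql
      · rw [List.getLast?_append]
        rw [List.getLast?_cons_cons] at hql
        rw [List.tail_cons, hql]; rfl
    · unfold List.Chain' at hqc ⊢; rw [List.isChain_append]
      refine ⟨hpc, hqc.tail, fun x hx y hy => ?_⟩
      rw [hpl] at hx; cases hx
      rw [List.isChain_cons] at hqc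
      exact hqc.1 y hy
  · intro z hz
    rcases List.mem_append.1 hz with h | h
    · exact Or.inl h
    · exact Or.inr (List.mem_cons_of_mem _ h)

lemma isPath_map {H : FlowGraph V} {p : List V} {a b : V} (f : V → V)
    (harc : ∀ x y, G.A x y → H.A (f x) (f y)) (h : G.IsPath p a b) :
    H.IsPath (p.map f) (f a) (f b) := by
  obtain ⟨hne, hh, hl, hc⟩ := h
  refine ⟨by simpa using hne, ?_, ?_, ?_⟩
  · rw [List.head?_map, hh]; rfl
  · rw [List.getLast?_map, hl]; rfl
  · unfold List.Chain'; rw [List.isChain_map]; exact hc.imp harc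

lemma exists_last_mem {l : List V} {v : V} (h : v ∈ l) :
    ∃ s t, l = s ++ v :: t ∧ v ∉ t := by
  induction l with
  | nil => simp at h
  | cons a l ih =>
    by_cases hv : v ∈ l
    · obtain ⟨s, t, rfl, ht⟩ := ih hv
      exact ⟨a :: s, t, rfl, ht⟩
    · have : v = a := by rcases List.mem_cons.1 h with h | h; exact h; exact absurd h hv
      exact ⟨[], l, by simp [this], hv⟩


lemma getLast?_append_right {l l' : List V} (h : l' ≠ []) : (l ++ l').getLast? = l'.getLast? := by
  rw [List.getLast?_append]
  cases hh : l'.getLast? with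
  | none => exact absurd (List.getLast?_eq_none_iff.1 hh) h
  | some b => simp [Option.or]

variable {T : SpanningTree G}

lemma anc_trans_s11 {a b c : V} (h1 : Anc T a b) (h2 : Anc T b c) : Anc T a c :=
  Relation.ReflTransGen.trans h2 h1



lemma rtg_iterate {f : V → V} {a b : V}
    (h : Relation.ReflTransGen (fun x y => f x = y) b a) : ∃ n, f^[n] b = a := by
  induction h with
  | refl => exact ⟨0, rfl⟩
  | @tail c e _ hstep ih =>
    obtain ⟨n, hn⟩ := ih
    exact ⟨n + 1, by rw [Function.iterate_succ_apply', hn, hstep]⟩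

lemma rtg_from_fixed {f : V → V} {s a : V} (hroot : f s = s)
    (h : Relation.ReflTransGen (fun x y => f x = y) s a) : a = s := by
  induction h with
  | refl => rfl
  | @tail c e _ hstep ih => subst ih; rw [hroot] at hstep; exact hstep.symm

lemma anc_le [LinearOrder V] (hbu : ∀ x, x ≠ G.s → x < T.parent x)
    {a b : V} (h : Anc T a b) : b ≤ a := by
  induction h with
  | refl => exact le_refl _
  | @tail c e _ hstep ih =>
    by_cases hcs : c = G.s
    · subst hcs; rw [T.parent_root] at hstep; exact hstep ▸ ih
    · exact le_trans ih (le_of_lt (hstep ▸ hbu c hcs))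

lemma anc_parent {a b : V} (h : Anc T a b) (hne : b ≠ a) : Anc T a (T.parent b) := by
  rcases h.cases_head with h | ⟨c, hc, hrest⟩
  · exact absurd h hne
  · exact hc ▸ hrest

lemma exists_treePath {a b : V} (h : Anc T a b) :
    ∃ p, G.IsPath p a b ∧ ∀ z ∈ p, Anc T a z ∧ Anc T z b := by
  induction h using Relation.ReflTransGen.head_induction_on with
  | refl =>
    refine ⟨[a], isPath_single a, fun z hz => ?_⟩
    rcases List.mem_singleton.1 hz with rfl
    exact ⟨Relation.ReflTransGen.refl, Relation.ReflTransGen.refl⟩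
  | @head b c hstep hrest ih =>
    by_cases hbs : b = G.s
    · subst hbs
      rw [T.parent_root] at hstep
      have : a = G.s := rtg_from_fixed T.parent_root (hstep ▸ hrest)
      subst this
      refine ⟨[G.s], isPath_single _, fun z hz => ?_⟩
      rcases List.mem_singleton.1 hz with rfl
      exact ⟨Relation.ReflTransGen.refl, Relation.ReflTransGen.refl⟩
    · obtain ⟨p, hp, hprops⟩ := ih
      have harc : G.A c b := hstep ▸ T.parent_arc b hbs
      have hcb : G.IsPath [c, b] c b := isPath_pair harc
      obtain ⟨hP, hmem⟩ := isPath_comp hp hcb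
      refine ⟨p ++ [b], hP, fun z hz => ?_⟩
      have hab : Anc T a b := Relation.ReflTransGen.head hstep hrest
      rcases hmem z hz with hzp | hzc
      · obtain ⟨h1, h2⟩ := hprops z hzp
        exact ⟨h1, Relation.ReflTransGen.head hstep h2⟩
      · rcases List.mem_cons.1 hzc with rfl | hz2
        · have hcp : z ∈ p := List.mem_of_getLast? hp.2.2.1
          exact ⟨(hprops z hcp).1, Relation.ReflTransGen.head hstep (hprops z hcp).2⟩
        · rcases List.mem_singleton.1 hz2 with rfl
          exact ⟨hab, Relation.ReflTransGen.refl⟩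

lemma lemA [LinearOrder V] (hbu : ∀ x, x ≠ G.s → x < T.parent x)
    {d : V → V} (hd : G.IsIdom d) {u : V}
    (hdesc : ∀ x, Anc T u x → x ≠ G.s → u < d x) :
    ∀ w x, G.Dom x w → Anc T u x → x = w := by
  have hN : ∀ y : V, ∃ n, T.parent^[n] y = G.s := fun y => rtg_iterate (T.root_reach y)
  set N : V → ℕ := fun y => Nat.find (hN y) with hNdef
  have hNs : ∀ y, T.parent^[N y] y = G.s := fun y => Nat.find_spec (hN y)
  have hfix : ∀ n, T.parent^[n] G.s = G.s := by
    intro n; induction n with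
    | zero => rfl
    | succ n ih => rw [Function.iterate_succ_apply', ih, T.parent_root]
  have key : ∀ z w : V, Anc T z w → z ≠ w → N z < N w := by
    intro z w hanc hne
    obtain ⟨k, hk⟩ := rtg_iterate hanc
    have hk1 : 1 ≤ k := by
      rcases Nat.eq_zero_or_pos k with rfl | h
      · exact absurd hk.symm hne
      · exact h
    by_cases hlt : N w < k
    · have hzs : z = G.s := by
        rw [← hk, show k = (k - N w) + N w by omega, Function.iterate_add_apply,
          hNs w, hfix]
      have hz0 : N z = 0 := by
        rw [hNdef]; exact Nat.find_eq_zero (hN z) |>.2 hzs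
      have : N w ≠ 0 := by
        intro h0
        have : w = G.s := by have := hNs w; rwa [h0] at this
        exact hne (hzs.trans this.symm)
      omega
    · push_neg at hlt
      have : T.parent^[N w - k] z = G.s := by
        rw [← hk, ← Function.iterate_add_apply, show N w - k + k = N w by omega, hNs w]
      have hle : N z ≤ N w - k := Nat.find_min' (hN z) this
      omega
  intro w x hdom hanc
  by_contra hxw
  suffices H : ∀ n, ∀ w x, N w < n → G.Dom x w → Anc T u x → x ≠ w → False by
    exact H (N w + 1) w x (Nat.lt_succ_self _) hdom hanc hxw
  clear hdom hanc hxw w x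
  intro n
  induction n with
  | zero => intro w x h; omega
  | succ n ih =>
    intro w x hlt hdom hanc hxw
    by_cases hws : w = G.s
    · subst hws
      have h1 : x ∈ [G.s] := hdom [G.s] (isPath_single _)
      have h2 : x = G.s := by simpa using h1
      exact hxw h2
    · obtain ⟨hdw_ne, hdw_dom, hdw_max⟩ := hd w hws
      obtain ⟨tp, htp, htpprop⟩ := exists_treePath (T := T) (a := G.s) (b := w) (T.root_reach w)
      have hdw_mem : d w ∈ tp := hdw_dom tp htp
      have hdw_anc : Anc T (d w) w := (htpprop _ hdw_mem).2
      have hxdw : G.Dom x (d w) := hdw_max x hdom hxw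
      have hNdw : N (d w) < N w := key (d w) w hdw_anc hdw_ne
      by_cases hxdweq : x = d w
      · have hanc_uw : Anc T u w := Relation.ReflTransGen.trans hdw_anc (hxdweq ▸ hanc)
        have h1 : u < d w := hdesc w hanc_uw hws
        have h2 : x ≤ u := anc_le hbu hanc
        rw [hxdweq] at h2
        exact absurd (lt_of_lt_of_le h1 h2) (lt_irrefl u)
      · exact ih (d w) x (by omega) hxdw hanc hxdweq
end Infra

/-- If `u ≠ v`, `v ∈ loop(u)`, and `d x > u` for all descendants `x` of `u` in `T`, then
`transform(u, v)` preserves the dominator relation on vertices other than `v`. -/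
theorem stmt11 [LinearOrder V] (G : FlowGraph V) (T : SpanningTree G)
    (hreach : ∀ v, G.Reach G.s v)
    (hbu : ∀ x, x ≠ G.s → x < T.parent x)
    (d : V → V) (hd : G.IsIdom d)
    (u v : V) (huv : u ≠ v) (hloop : InLoop G T u v)
    (hdesc : ∀ x, Anc T u x → x ≠ G.s → u < d x) :
    ∀ x w, x ≠ v → w ≠ v →
      ((transform G T u v).Dom x w ↔ G.Dom x w) := by
  classical
  obtain ⟨hanc_uv, lp, hlp, hlpm⟩ := hloop
  have hvu : v ≤ u := anc_le hbu hanc_uv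
  have hvltu : v < u := lt_of_le_of_ne hvu (fun h => huv h.symm)
  have hvs : v ≠ G.s := by
    intro h
    have h1 : u ≤ G.s := anc_le hbu (T.root_reach u)
    rw [h] at hvltu
    exact absurd (lt_of_lt_of_le hvltu h1) (lt_irrefl _)
  have hus : u ≠ G.s := by
    intro h
    have h1 := hdesc v hanc_uv hvs
    have h2 : d v ≤ G.s := anc_le hbu (T.root_reach (d v))
    rw [h] at h1
    exact absurd (lt_of_lt_of_le h1 h2) (lt_irrefl _)
  have hvpv : v < T.parent v := hbu v hvs
  have hanc_upv : Anc T u (T.parent v) := anc_parent hanc_uv (fun h => huv h.symm)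
  have hpvu : T.parent v ≤ u := anc_le hbu hanc_upv
  have hupu : u < T.parent u := hbu u hus
  have hvnepv : v ≠ T.parent v := ne_of_lt hvpv
  have hρ : ∀ m, m ≠ v → repl v (T.parent v) m = m := fun m h => if_neg h
  have hρv : repl v (T.parent v) v = T.parent v := if_pos rfl
  have arcG' : ∀ a b, G.A a b →
      (transform G T u v).A (repl v (T.parent v) a) (repl v (T.parent v) b) :=
    fun a b h => ⟨a, b, Or.inl h, rfl, rfl⟩
  have arcadd : ∀ c, G.A v c → Anc T u c → c ≠ u → c ≠ v → c ≠ T.parent v →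
      (transform G T u v).A (T.parent u) c := by
    intro c h1 h2 h3 h4 h5
    have hpuv : T.parent u ≠ v := fun h => absurd (h ▸ hupu) (not_lt.2 (le_of_lt hvltu))
    have h6 : (transform G T u v).A (repl v (T.parent v) (T.parent u)) (repl v (T.parent v) c) :=
      ⟨T.parent u, c, Or.inr ⟨rfl, h1, h2, h3, h4, h5⟩, rfl, rfl⟩
    rwa [hρ _ hpuv, hρ _ h4] at h6
  have mapfix : ∀ (l : List V), (∀ z ∈ l, z ≠ v) → l.map (repl v (T.parent v)) = l := by
    intro l hl
    conv_rhs => rw [← List.map_id l]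
    exact List.map_congr_left (fun a ha => hρ a (hl a ha))
  have pathfix : ∀ (l : List V) (a b : V), (∀ z ∈ l, z ≠ v) → G.IsPath l a b →
      (transform G T u v).IsPath l a b := by
    intro l a b hl h
    have ha : a ≠ v := hl a (List.mem_of_mem_head? (by rw [h.2.1]; exact rfl))
    have hb : b ≠ v := hl b (List.mem_of_getLast? h.2.2.1)
    have h1 := isPath_map _ arcG' h
    rwa [mapfix l hl, hρ a ha, hρ b hb] at h1
  obtain ⟨tp0, htp0, htp0m⟩ := exists_treePath (G := G) hanc_upv
  have hDex : ∃ D, G.IsPath D v (T.parent v) ∧ ∀ z ∈ D, Anc T u z := by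
    obtain ⟨h1, h2⟩ := isPath_comp hlp htp0
    exact ⟨_, h1, fun z hz => (h2 z hz).elim (hlpm z) (fun h => (htp0m z h).1)⟩
  obtain ⟨D, hD, hDanc⟩ := hDex
  have tpS : ∀ c : V, ∃ p, G.IsPath p G.s c ∧ ∀ z ∈ p, Anc T z c := by
    intro c
    obtain ⟨p, hp, hm⟩ := exists_treePath (G := G) (T.root_reach c : Anc T G.s c)
    exact ⟨p, hp, fun z hz => (hm z hz).2⟩
  intro x w hxv hwv
  constructor
  · -- transform dominance implies G dominance
    intro hdom' p hp
    by_cases hxpv : x = T.parent v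
    · by_contra hxp
      by_cases hvp : v ∈ p
      · obtain ⟨p₁, p₂, rfl, hvnot⟩ := exists_last_mem hvp
        have hp₂ne : p₂ ≠ [] := by
          intro h; subst h
          have h1 : (p₁ ++ [v]).getLast? = some v := List.getLast?_concat
          rw [hp.2.2.1] at h1
          exact hwv (by injection h1)
        obtain ⟨c, t, rfl⟩ := List.exists_cons_of_ne_nil hp₂ne
        have hch2 : List.Chain' G.A (v :: c :: t) := (List.isChain_append.1 hp.2.2.2).2.1
        have harcvc : G.A v c := (List.isChain_cons_cons.1 hch2).1
        have hp₂ : G.IsPath (c :: t) c w := by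
          refine ⟨by simp, rfl, ?_, hch2.tail⟩
          have h1 := hp.2.2.1
          rwa [getLast?_append_right (by simp), List.getLast?_cons_cons] at h1
        have hnz : ∀ z ∈ c :: t, z ≠ v ∧ z ≠ T.parent v := by
          intro z hz
          refine ⟨fun h => hvnot (h ▸ hz), fun h => hxp ?_⟩
          rw [← hxpv] at h
          exact h ▸ List.mem_append_right p₁ (List.mem_cons_of_mem v hz)
        have hp₂' := pathfix _ _ _ (fun z hz => (hnz z hz).1) hp₂
        have build : ∃ q, (transform G T u v).IsPath q G.s w ∧ ∀ z ∈ q, z ≠ T.parent v := by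
          by_cases hancc : Anc T u c
          · by_cases hcu : c = u
            · obtain ⟨tp, htp, htpm⟩ := tpS c
              have htpne : ∀ z ∈ tp, z ≠ v ∧ z ≠ T.parent v := by
                intro z hz
                have hz1 : c ≤ z := anc_le hbu (htpm z hz)
                rw [hcu] at hz1
                constructor
                · intro h; rw [h] at hz1; exact absurd hz1 (not_le.2 hvltu)
                · intro h; rw [h] at hz1
                  have h2 : T.parent v = u := le_antisymm hpvu hz1
                  exact (hnz c (List.mem_cons_self)).2 (hcu.trans h2.symm)
              have htp' := pathfix _ _ _ (fun z hz => (htpne z hz).1) htp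
              obtain ⟨hq, hqm⟩ := isPath_comp htp' hp₂'
              exact ⟨_, hq, fun z hz => (hqm z hz).elim (fun h => (htpne z h).2)
                (fun h => (hnz z h).2)⟩
            · have harc := arcadd c harcvc hancc hcu (hnz c (List.mem_cons_self)).1
                (hnz c (List.mem_cons_self)).2
              obtain ⟨tp, htp, htpm⟩ := tpS (T.parent u)
              have htpne : ∀ z ∈ tp, z ≠ v ∧ z ≠ T.parent v := by
                intro z hz
                have hz1 : T.parent u ≤ z := anc_le hbu (htpm z hz)
                have hz2 : u < z := lt_of_lt_of_le hupu hz1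
                exact ⟨fun h => absurd (h ▸ hz2) (not_lt.2 (le_of_lt hvltu)),
                  fun h => absurd (h ▸ hz2) (not_lt.2 hpvu)⟩
              have htp' := pathfix _ _ _ (fun z hz => (htpne z hz).1) htp
              have hpc : (transform G T u v).IsPath [T.parent u, c] (T.parent u) c :=
                isPath_pair harc
              obtain ⟨hq1, hqm1⟩ := isPath_comp htp' hpc
              obtain ⟨hq, hqm⟩ := isPath_comp hq1 hp₂'
              refine ⟨_, hq, fun z hz => ?_⟩
              rcases hqm z hz with h | h
              · rcases hqm1 z h with h' | h'
                · exact (htpne z h').2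
                · rcases List.mem_cons.1 h' with rfl | h''
                  · exact fun he => absurd (he ▸ hupu) (not_lt.2 hpvu)
                  · rcases List.mem_singleton.1 h'' with rfl
                    exact (hnz z (List.mem_cons_self)).2
              · exact (hnz z h).2
          · obtain ⟨tp, htp, htpm⟩ := tpS c
            have htpne : ∀ z ∈ tp, z ≠ v ∧ z ≠ T.parent v := by
              intro z hz
              constructor
              · intro h; exact hancc (anc_trans_s11 hanc_uv (h ▸ htpm z hz))
              · intro h; exact hancc (anc_trans_s11 hanc_upv (h ▸ htpm z hz))
            have htp' := pathfix _ _ _ (fun z hz => (htpne z hz).1) htp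
            obtain ⟨hq, hqm⟩ := isPath_comp htp' hp₂'
            exact ⟨_, hq, fun z hz => (hqm z hz).elim (fun h => (htpne z h).2)
              (fun h => (hnz z h).2)⟩
        obtain ⟨q, hq, hqne⟩ := build
        exact hqne x (hdom' q hq) hxpv
      · have hp' := pathfix p _ _ (fun z hz h => hvp (h ▸ hz)) hp
        exact hxp (hdom' p hp')
    · have hq := isPath_map _ arcG' hp
      rw [hρ _ (Ne.symm hvs), hρ _ hwv] at hq
      have hx : x ∈ p.map (repl v (T.parent v)) := hdom' _ hq
      obtain ⟨y, hy, hyx⟩ := List.mem_map.1 hx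
      by_cases hyv : y = v
      · subst hyv; rw [hρv] at hyx; exact absurd hyx.symm hxpv
      · rw [hρ y hyv] at hyx; exact hyx ▸ hy
  · -- G dominance implies transform dominance
    intro hdom q hq
    have lift : ∀ (q : List V) (a : V), (transform G T u v).IsPath q a w →
        ∀ m, repl v (T.parent v) m = a →
        ∃ P, G.IsPath P m w ∧ ∀ z ∈ P, z ∈ q ∨ z = v ∨ Anc T u z := by
      intro q
      induction q with
      | nil => intro a h m hm; exact absurd rfl h.1
      | cons b q' ih =>
        intro a h m hm
        have hba : b = a := by simpa using h.2.1
        subst hba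
        rcases q' with _ | ⟨b', q''⟩
        · have hbw : b = w := by simpa using h.2.2.1
          by_cases hmw : m = w
          · refine ⟨[m], by rw [hmw]; exact isPath_single w, fun z hz => Or.inl ?_⟩
            rcases List.mem_singleton.1 hz with rfl
            have hbz : b = z := hbw.trans hmw.symm
            rw [← hbz]
            exact List.mem_singleton.2 rfl
          · have hmv : m = v := by
              by_contra hmv
              rw [hρ m hmv] at hm; exact hmw (hm.trans hbw)
            rw [hmv, hρv] at hm
            have hpvw : T.parent v = w := hm.trans hbw
            refine ⟨D, ?_, fun z hz => Or.inr (Or.inr (hDanc z hz))⟩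
            rw [hmv]
            exact hpvw ▸ hD
        · have harc : (transform G T u v).A b b' := (List.isChain_cons_cons.1 h.2.2.2).1
          have htail : (transform G T u v).IsPath (b' :: q'') b' w := by
            refine ⟨by simp, rfl, ?_, h.2.2.2.tail⟩
            have h1 := h.2.2.1; rwa [List.getLast?_cons_cons] at h1
          obtain ⟨a₀, b₀, hB, hba₀, hbb₀⟩ := harc
          obtain ⟨P', hP', hP'm⟩ := ih b' htail b₀ hbb₀.symm
          have memlift : ∀ z, (z ∈ b' :: q'' ∨ z = v ∨ Anc T u z) →
              (z ∈ b :: b' :: q'' ∨ z = v ∨ Anc T u z) := by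
            intro z hz
            rcases hz with h1 | h1
            · exact Or.inl (List.mem_cons_of_mem _ h1)
            · exact Or.inr h1
          rcases hB with hGarc | ⟨hpu, hvc, hancc, hcu, hcv, hcpv⟩
          · by_cases hma : m = a₀
            · refine ⟨m :: P', isPath_cons hP' (hma ▸ hGarc), fun z hz => ?_⟩
              rcases List.mem_cons.1 hz with rfl | hz'
              · by_cases hzv : z = v
                · exact Or.inr (Or.inl hzv)
                · have hb : b = z := by rw [hba₀, ← hma, hρ z hzv]
                  exact Or.inl (by rw [← hb]; exact List.mem_cons_self)
              · exact memlift z (hP'm z hz')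
            · have hmm : repl v (T.parent v) m = repl v (T.parent v) a₀ := hm.trans hba₀
              have hcases : (m = v ∧ a₀ = T.parent v) ∨ (m = T.parent v ∧ a₀ = v) := by
                by_cases hmv : m = v
                · by_cases ha₀v : a₀ = v
                  · exact absurd (hmv.trans ha₀v.symm) hma
                  · rw [hmv, hρv, hρ a₀ ha₀v] at hmm; exact Or.inl ⟨hmv, hmm.symm⟩
                · by_cases ha₀v : a₀ = v
                  · rw [hρ m hmv, ha₀v, hρv] at hmm; exact Or.inr ⟨hmm, ha₀v⟩
                  · rw [hρ m hmv, hρ a₀ ha₀v] at hmm; exact absurd hmm hma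
              rcases hcases with ⟨hm1, ha1⟩ | ⟨hm1, ha1⟩
              · rw [ha1] at hGarc hba₀
                have hP2 : G.IsPath (T.parent v :: P') (T.parent v) w := isPath_cons hP' hGarc
                obtain ⟨hQ, hQm⟩ := isPath_comp hD hP2
                refine ⟨_, by rw [hm1]; exact hQ, fun z hz => ?_⟩
                rcases hQm z hz with h1 | h1
                · exact Or.inr (Or.inr (hDanc z h1))
                · rcases List.mem_cons.1 h1 with rfl | h2
                  · have hb : b = T.parent v := by rw [hba₀, hρ _ (Ne.symm hvnepv)]
                    exact Or.inl (by rw [← hb]; exact List.mem_cons_self)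
                  · exact memlift z (hP'm z h2)
              · rw [ha1] at hGarc hba₀
                have hP2 : G.IsPath (v :: P') v w := isPath_cons hP' hGarc
                have hP3 : G.IsPath (T.parent v :: v :: P') (T.parent v) w :=
                  isPath_cons hP2 (T.parent_arc v hvs)
                refine ⟨_, by rw [hm1]; exact hP3, fun z hz => ?_⟩
                rcases List.mem_cons.1 hz with rfl | hz'
                · have hb : b = T.parent v := by rw [hba₀, hρv]
                  exact Or.inl (by rw [← hb]; exact List.mem_cons_self)
                · rcases List.mem_cons.1 hz' with rfl | hz''
                  · exact Or.inr (Or.inl rfl)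
                  · exact memlift z (hP'm z hz'')
          · have hpuv : T.parent u ≠ v :=
              fun h => absurd (h ▸ hupu) (not_lt.2 (le_of_lt hvltu))
            have hbpu : b = T.parent u := by rw [hba₀, hpu, hρ _ hpuv]
            have hmpu : m = T.parent u := by
              by_cases hmv : m = v
              · exfalso
                rw [hmv, hρv] at hm
                have h1 : T.parent v = T.parent u := hm.trans hbpu
                rw [h1] at hpvu
                exact absurd (lt_of_lt_of_le hupu hpvu) (lt_irrefl _)
              · rw [hρ m hmv] at hm; exact hm.trans hbpu
            obtain ⟨tp, htp, htpm⟩ := exists_treePath (G := G) hancc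
            have hP2 : G.IsPath (T.parent u :: tp) (T.parent u) b₀ :=
              isPath_cons htp (T.parent_arc u hus)
            obtain ⟨hQ, hQm⟩ := isPath_comp hP2 hP'
            refine ⟨_, by rw [hmpu]; exact hQ, fun z hz => ?_⟩
            rcases hQm z hz with h1 | h1
            · rcases List.mem_cons.1 h1 with rfl | h2
              · exact Or.inl (by rw [← hbpu]; exact List.mem_cons_self)
              · exact Or.inr (Or.inr (htpm z h2).1)
            · exact memlift z (hP'm z h1)
    obtain ⟨P, hP, hPm⟩ := lift q G.s hq G.s (hρ _ (Ne.symm hvs))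
    have hxP : x ∈ P := hdom P hP
    rcases hPm x hxP with h | h | h
    · exact h
    · exact absurd h hxv
    · have hxw : x = w := lemA hbu hd hdesc w x hdom h
      exact hxw ▸ List.mem_of_getLast? hq.2.2.1
end
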